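/- Let T and N be linear relations in a complex vector space V such that T ∩ N has trivial domain (D_{T∩N} = {0}), and set O = {λ ∈ ℂ : R_{T−λI} ∩ R_{N−λI} = Ind(T∩N)}. Then ℂ ∖ σ_p(T +̂ N) = O ∖ (σ_p(T) ∪ σ_p(N)); in particular σ_p(T +̂ N) = σ_p(T) ∪ σ_p(N) ∪ (ℂ ∖ O). -/
import Mathlib


noncomputable section

variable {V : Type*} [AddCommGroup V] [Module ℂ V]

def domSet (A : Set (V × V)) : Set V := {x | ∃ y, (x, y) ∈ A}
def ranSet (A : Set (V × V)) : Set V := {y | ∃ x, (x, y) ∈ A}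
def mulSet (A : Set (V × V)) : Set V := {y | ((0 : V), y) ∈ A}
def kerl (A : Set (V × V)) (l : ℂ) : Set V := {x | (x, l • x) ∈ A}
def pointSpec (A : Set (V × V)) : Set ℂ := {l | ∃ x : V, x ≠ 0 ∧ (x, l • x) ∈ A}
/-- The relation `A − λI = {(x, y − λx) : (x,y) ∈ A}`. -/
def shiftRel (A : Set (V × V)) (l : ℂ) : Set (V × V) := {p | ∃ q ∈ A, p = (q.1, q.2 - l • q.1)}
def invRel (A : Set (V × V)) : Set (V × V) := {p | (p.2, p.1) ∈ A}
def imageRel (A : Set (V × V)) (M : Set V) : Set V := {y | ∃ x ∈ M, (x, y) ∈ A}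
def setSum (A B : Set V) : Set V := {z | ∃ a ∈ A, ∃ b ∈ B, z = a + b}
/-- Componentwise sum `T +̂ N = {(x+u, y+v) : (x,y) ∈ T, (u,v) ∈ N}`. -/
def cwSum (A B : Set (V × V)) : Set (V × V) := {p | ∃ a ∈ A, ∃ b ∈ B, p = a + b}
/-- Operator-like difference `A − B = {(u, x − y) : (u,x) ∈ A, (u,y) ∈ B}`. -/
def diffRel (A B : Set (V × V)) : Set (V × V) :=
  {p | ∃ x y, (p.1, x) ∈ A ∧ (p.1, y) ∈ B ∧ p.2 = x - y}

/-- The set `O = {λ : R_{T−λI} ∩ R_{N−λI} = Ind(T∩N)}`. -/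
def Oset (T N TN : Set (V × V)) : Set ℂ :=
  {l | ranSet (shiftRel T l) ∩ ranSet (shiftRel N l) = mulSet TN}

lemma key_lemma (T N : Submodule ℂ (V × V))
    (htriv : domSet ((T ⊓ N : Submodule ℂ (V × V)) : Set (V × V)) = {0}) (l : ℂ) :
    l ∉ pointSpec (cwSum (T : Set (V × V)) (N : Set (V × V))) ↔
      l ∈ Oset (T : Set (V × V)) (N : Set (V × V))
          ((T ⊓ N : Submodule ℂ (V × V)) : Set (V × V)) ∧
      l ∉ pointSpec (T : Set (V × V)) ∧ l ∉ pointSpec (N : Set (V × V)) := by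
  constructor
  · intro h
    have H : ∀ x : V, (x, l • x) ∈ cwSum (T : Set (V × V)) (N : Set (V × V)) → x = 0 := by
      intro x hx
      by_contra hx0
      exact h ⟨x, hx0, hx⟩
    refine ⟨?_, ?_, ?_⟩
    · ext z
      constructor
      · rintro ⟨⟨a, ⟨qa1, qa2⟩, hqa, eqa⟩, ⟨c, ⟨qc1, qc2⟩, hqc, eqc⟩⟩
        simp only [Prod.mk.injEq] at eqa eqc
        obtain ⟨ha1, ha2⟩ := eqa
        obtain ⟨hc1, hc2⟩ := eqc
        have h2 : qa2 - l • qa1 = qc2 - l • qc1 := ha2.symm.trans hc2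
        have hmem : ((qa1 - qc1, l • (qa1 - qc1)) : V × V) ∈
            cwSum (T : Set (V × V)) (N : Set (V × V)) := by
          refine ⟨(qa1, qa2), hqa, -(qc1, qc2), N.neg_mem hqc, ?_⟩
          have h3 : qa2 - qc2 = l • (qa1 - qc1) := by
            rw [smul_sub]
            exact sub_eq_sub_iff_sub_eq_sub.mp h2
          simp only [Prod.neg_mk, Prod.mk_add_mk, Prod.mk.injEq]
          exact ⟨sub_eq_add_neg _ _, by rw [← h3]; abel⟩
        have h4 : qa1 - qc1 = 0 := H _ hmem
        have h5 : qa1 = qc1 := sub_eq_zero.mp h4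
        have h6 : qa2 = qc2 := by
          have := h2
          rw [h5] at this
          exact sub_left_injective this
        have hTN : ((qa1, qa2) : V × V) ∈ (T ⊓ N : Submodule ℂ (V × V)) := by
          refine ⟨hqa, ?_⟩
          rw [h5, h6]; exact hqc
        have hq1 : qa1 = 0 := by
          have : qa1 ∈ domSet ((T ⊓ N : Submodule ℂ (V × V)) : Set (V × V)) := ⟨qa2, hTN⟩
          rw [htriv] at this
          exact this
        show ((0 : V), z) ∈ (T ⊓ N : Submodule ℂ (V × V))
        have : z = qa2 := by rw [ha2, hq1, smul_zero, sub_zero]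
        rw [this, ← hq1]
        exact hTN
      · intro hz
        have hz' : ((0 : V), z) ∈ (T ⊓ N : Submodule ℂ (V × V)) := hz
        constructor
        · exact ⟨0, (0, z), hz'.1, by simp⟩
        · exact ⟨0, (0, z), hz'.2, by simp⟩
    · rintro ⟨x, hx0, hx⟩
      exact hx0 (H x ⟨(x, l • x), hx, (0, 0), N.zero_mem, by simp⟩)
    · rintro ⟨x, hx0, hx⟩
      exact hx0 (H x ⟨(0, 0), T.zero_mem, (x, l • x), hx, by simp⟩)
  · rintro ⟨hO, hT, hN⟩ ⟨x, hx0, ⟨a1, a2⟩, ha, ⟨b1, b2⟩, hb, hsum⟩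
    rw [Prod.mk_add_mk, Prod.mk.injEq] at hsum
    obtain ⟨hx1, hx2⟩ := hsum
    set z : V := a2 - l • a1 with hzdef
    have hz2 : z = -b2 - l • (-b1) := by
      have hlx : l • x = l • a1 + l • b1 := by rw [hx1, smul_add]
      have : a2 + b2 = l • a1 + l • b1 := hx2.symm.trans hlx
      rw [hzdef, smul_neg, sub_neg_eq_add]
      linear_combination (norm := module) this
    have hzT : z ∈ ranSet (shiftRel (T : Set (V × V)) l) := ⟨a1, (a1, a2), ha, rfl⟩
    have hzN : z ∈ ranSet (shiftRel (N : Set (V × V)) l) := by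
      refine ⟨-b1, (-b1, -b2), ?_, ?_⟩
      · exact N.neg_mem hb
      · simp only [Prod.mk.injEq]
        exact ⟨trivial, hz2⟩
    have hzTN : ((0 : V), z) ∈ (T ⊓ N : Submodule ℂ (V × V)) := by
      have hmem : z ∈ mulSet ((T ⊓ N : Submodule ℂ (V × V)) : Set (V × V)) := by
        rw [← hO]; exact ⟨hzT, hzN⟩
      exact hmem
    have ha1 : a1 = 0 := by
      by_contra ha1
      apply hT
      refine ⟨a1, ha1, ?_⟩
      have : ((a1, a2) : V × V) - (0, z) ∈ T := T.sub_mem ha hzTN.1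
      have heq : ((a1, a2) : V × V) - (0, z) = (a1, l • a1) := by
        simp only [Prod.mk_sub_mk, sub_zero, Prod.mk.injEq, hzdef]
        exact ⟨trivial, by abel⟩
      rwa [heq] at this
    have hb1 : b1 = 0 := by
      by_contra hb1
      apply hN
      refine ⟨b1, hb1, ?_⟩
      have : ((b1, b2) : V × V) + (0, z) ∈ N := N.add_mem hb hzTN.2
      have heq : ((b1, b2) : V × V) + (0, z) = (b1, l • b1) := by
        simp only [Prod.mk_add_mk, add_zero, Prod.mk.injEq]
        refine ⟨trivial, ?_⟩
        rw [hz2, smul_neg, sub_neg_eq_add]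
        abel
      rwa [heq] at this
    exact hx0 (by rw [hx1, ha1, hb1, add_zero])

/-- Corollary 3.3: if `D_{T∩N} = {0}` then
`ℂ ∖ σ_p(T +̂ N) = O ∖ (σ_p(T) ∪ σ_p(N))`, and in particular
`σ_p(T +̂ N) = σ_p(T) ∪ σ_p(N) ∪ (ℂ ∖ O)`. -/
theorem statement11 (T N : Submodule ℂ (V × V))
    (htriv : domSet ((T ⊓ N : Submodule ℂ (V × V)) : Set (V × V)) = {0}) :
    (Set.univ \ pointSpec (cwSum (T : Set (V × V)) (N : Set (V × V)))
        = Oset (T : Set (V × V)) (N : Set (V × V))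
            ((T ⊓ N : Submodule ℂ (V × V)) : Set (V × V))
          \ (pointSpec (T : Set (V × V)) ∪ pointSpec (N : Set (V × V)))) ∧
    pointSpec (cwSum (T : Set (V × V)) (N : Set (V × V)))
        = pointSpec (T : Set (V × V)) ∪ pointSpec (N : Set (V × V)) ∪
          (Set.univ \ Oset (T : Set (V × V)) (N : Set (V × V))
            ((T ⊓ N : Submodule ℂ (V × V)) : Set (V × V))) := by
  constructor
  · ext l
    have hk := key_lemma T N htriv l
    simp only [Set.mem_diff, Set.mem_univ, true_and, Set.mem_union]
    tauto
  · ext l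
    have hk := key_lemma T N htriv l
    simp only [Set.mem_union, Set.mem_diff, Set.mem_univ, true_and]
    tauto
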